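/- If every two cycles of a graph G are vertex-disjoint, then ω(G) equals the number of cycles of G, where ω denotes the dimension of the cycle space. -/

import Mathlib

/-- The dimension of the cycle space of `G`: `ω(G) = m - n + c`, where `m` is the number of
edges, `n` the number of vertices and `c` the number of connected components. -/
noncomputable def SimpleGraph.cycleDim {V : Type*} (G : SimpleGraph V) : ℤ :=
  (Nat.card G.edgeSet : ℤ) - (Nat.card V : ℤ) + (Nat.card G.ConnectedComponent : ℤ)

open SimpleGraph

section Aux

open Finset in
private lemma fiber_count {α β : Type*} [Fintype α] [Fintype β] [DecidableEq α] [DecidableEq β]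
    (f : α → β) (b₀ : β) (a₁ a₂ : α) (hne : a₁ ≠ a₂) (h₁ : f a₁ = b₀) (h₂ : f a₂ = b₀)
    (hfib : ∀ a, f a = b₀ → a = a₁ ∨ a = a₂)
    (h1 : ∀ b, b ≠ b₀ → ∃! a, f a = b) :
    Fintype.card α = Fintype.card β + 1 := by
  have key : Fintype.card α = ∑ b : β, (univ.filter fun a => f a = b).card :=
    Finset.card_eq_sum_card_fiberwise (fun a _ => mem_univ _)
  rw [key, Finset.sum_eq_sum_sdiff_singleton_add (mem_univ b₀)]
  have hb0 : (univ.filter fun a => f a = b₀) = {a₁, a₂} := by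
    ext a
    simp only [mem_filter, mem_univ, true_and, mem_insert, mem_singleton]
    exact ⟨fun h => hfib a h, by rintro (rfl | rfl) <;> assumption⟩
  rw [hb0, Finset.card_insert_of_notMem (by simpa using hne), Finset.card_singleton]
  have hrest : ∀ b ∈ univ \ {b₀}, (univ.filter fun a => f a = b).card = 1 := by
    intro b hb
    rw [Finset.card_eq_one]
    obtain ⟨a, ha, hu⟩ := h1 b (by simpa using (Finset.mem_sdiff.mp hb).2)
    refine ⟨a, ?_⟩
    ext a'
    simp only [mem_filter, mem_univ, true_and, mem_singleton]
    exact ⟨fun h => hu a' h, fun h => h ▸ ha⟩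
  rw [Finset.sum_congr rfl hrest, Finset.sum_const, smul_eq_mul, mul_one,
    Finset.card_sdiff_of_subset (Finset.subset_univ _), Finset.card_singleton, Finset.card_univ]
  have : 0 < Fintype.card β := Fintype.card_pos_iff.mpr ⟨b₀⟩
  omega

variable {V : Type*}

private lemma reach_cases {G : SimpleGraph V} {v w u x : V} (p : G.Walk u x) :
    (G \ fromEdgeSet {s(v, w)}).Reachable u x ∨
      ((G \ fromEdgeSet {s(v, w)}).Reachable u v ∧ (G \ fromEdgeSet {s(v, w)}).Reachable w x) ∨
      ((G \ fromEdgeSet {s(v, w)}).Reachable u w ∧ (G \ fromEdgeSet {s(v, w)}).Reachable v x) := by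
  induction p with
  | nil => exact Or.inl (Reachable.refl _)
  | @cons a b c h p ih =>
    by_cases he : s(a, b) = s(v, w)
    · rw [Sym2.eq_iff] at he
      rcases he with ⟨rfl, rfl⟩ | ⟨rfl, rfl⟩
      · rcases ih with h1 | ⟨h2, h3⟩ | ⟨h2, h3⟩
        · exact Or.inr (Or.inl ⟨Reachable.refl _, h1⟩)
        · exact Or.inl (h2.symm.trans h3)
        · exact Or.inl h3
      · rcases ih with h1 | ⟨h2, h3⟩ | ⟨h2, h3⟩
        · exact Or.inr (Or.inr ⟨Reachable.refl _, h1⟩)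
        · exact Or.inl h3
        · exact Or.inl (h2.symm.trans h3)
    · have h' : (G \ fromEdgeSet {s(v, w)}).Adj a b := by
        rw [sdiff_adj]
        exact ⟨h, by simp [fromEdgeSet_adj, he]⟩
      rcases ih with h1 | ⟨h2, h3⟩ | ⟨h2, h3⟩
      · exact Or.inl (h'.reachable.trans h1)
      · exact Or.inr (Or.inl ⟨h'.reachable.trans h2, h3⟩)
      · exact Or.inr (Or.inr ⟨h'.reachable.trans h2, h3⟩)

private lemma cc_card_nonbridge [Finite V] {G : SimpleGraph V} {v w : V}
    (hr : (G \ fromEdgeSet {s(v, w)}).Reachable v w) :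
    Nat.card (G \ fromEdgeSet {s(v, w)}).ConnectedComponent = Nat.card G.ConnectedComponent := by
  set G' := G \ fromEdgeSet {s(v, w)} with hG'
  have hle : G' ≤ G := sdiff_le
  refine Nat.card_eq_of_bijective (ConnectedComponent.map (Hom.ofLE hle)) ⟨?_, ?_⟩
  · intro a b hab
    induction a using ConnectedComponent.ind with | _ a =>
    induction b using ConnectedComponent.ind with | _ b =>
    simp only [ConnectedComponent.map_mk, Hom.ofLE_apply,
      ConnectedComponent.eq] at hab ⊢
    obtain ⟨p⟩ := hab
    rcases reach_cases (v := v) (w := w) p with h1 | ⟨h2, h3⟩ | ⟨h2, h3⟩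
    · exact h1
    · exact (h2.trans hr).trans h3
    · exact (h2.trans hr.symm).trans h3
  · intro c
    induction c using ConnectedComponent.ind with | _ c =>
    exact ⟨G'.connectedComponentMk c, by simp [ConnectedComponent.map_mk]⟩

private lemma cc_card_bridge [Finite V] {G : SimpleGraph V} {v w : V} (hadj : G.Adj v w)
    (hnr : ¬ (G \ fromEdgeSet {s(v, w)}).Reachable v w) :
    Nat.card (G \ fromEdgeSet {s(v, w)}).ConnectedComponent
      = Nat.card G.ConnectedComponent + 1 := by
  classical
  set G' := G \ fromEdgeSet {s(v, w)} with hG'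
  have hle : G' ≤ G := sdiff_le
  cases nonempty_fintype V
  haveI : Fintype G'.ConnectedComponent := Fintype.ofFinite _
  haveI : Fintype G.ConnectedComponent := Fintype.ofFinite _
  rw [Nat.card_eq_fintype_card, Nat.card_eq_fintype_card]
  set f : G'.ConnectedComponent → G.ConnectedComponent :=
    ConnectedComponent.map (Hom.ofLE hle) with hf
  have hfmk : ∀ a : V, f (G'.connectedComponentMk a) = G.connectedComponentMk a := fun a => by
    simp [hf, ConnectedComponent.map_mk]
  apply fiber_count f (G.connectedComponentMk v) (G'.connectedComponentMk v)
      (G'.connectedComponentMk w)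
  · intro h
    exact hnr ((ConnectedComponent.eq).mp h)
  · exact hfmk v
  · rw [hfmk w]
    exact ConnectedComponent.sound hadj.symm.reachable
  · intro a ha
    induction a using ConnectedComponent.ind with | _ a =>
    rw [hfmk a] at ha
    obtain ⟨p⟩ := (ConnectedComponent.eq).mp ha
    rcases reach_cases (v := v) (w := w) p with h1 | ⟨h2, h3⟩ | ⟨h2, h3⟩
    · exact Or.inl (ConnectedComponent.sound h1)
    · exact Or.inl (ConnectedComponent.sound h2)
    · exact Or.inr (ConnectedComponent.sound h2)
  · intro b hb
    induction b using ConnectedComponent.ind with | _ x =>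
    refine ⟨G'.connectedComponentMk x, hfmk x, ?_⟩
    intro a ha
    induction a using ConnectedComponent.ind with | _ a =>
    rw [hfmk a] at ha
    obtain ⟨p⟩ := (ConnectedComponent.eq).mp ha
    rcases reach_cases (v := v) (w := w) p with h1 | ⟨h2, h3⟩ | ⟨h2, h3⟩
    · exact ConnectedComponent.sound h1
    · exact absurd (ha ▸ ConnectedComponent.sound (h2.mono hle)) hb
    · refine absurd ?_ hb
      rw [← ha]
      exact ConnectedComponent.sound ((h2.mono hle).trans hadj.symm.reachable)

private def cycSet (G : SimpleGraph V) : Set (Set (Sym2 V)) :=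
  {E | ∃ (u : V) (c : G.Walk u u), c.IsCycle ∧ E = {e | e ∈ c.edges}}

private lemma cycSet_mono {G G' : SimpleGraph V} (hle : G' ≤ G) : cycSet G' ⊆ cycSet G := by
  classical
  rintro E ⟨u, c, hc, rfl⟩
  refine ⟨u, c.transfer G (fun f hf => edgeSet_mono hle (c.edges_subset_edgeSet hf)),
    hc.transfer _, ?_⟩
  simp [Walk.edges_transfer]

private lemma edgeSet_delete (G : SimpleGraph V) (e : Sym2 V) :
    (G \ fromEdgeSet {e}).edgeSet = G.edgeSet \ {e} := by
  rw [edgeSet_sdiff, edgeSet_fromEdgeSet, edgeSet_sdiff_sdiff_isDiag]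

private lemma main_aux [Fintype V] :
    ∀ (n : ℕ) (G : SimpleGraph V), Nat.card G.edgeSet = n →
      (∀ (u v : V) (c : G.Walk u u) (d : G.Walk v v), c.IsCycle → d.IsCycle →
        (∃ w, w ∈ c.support ∧ w ∈ d.support) → {e | e ∈ c.edges} = {e | e ∈ d.edges}) →
      G.cycleDim = (Nat.card (cycSet G) : ℤ) := by
  intro n
  induction n using Nat.strong_induction_on with
  | _ n IH =>
  intro G hn hdisj
  classical
  by_cases hcyc : ∃ (u : V) (c : G.Walk u u), c.IsCycle
  · -- there is a cycle; delete one of its edges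
    obtain ⟨u₀, c₀, hc₀⟩ := hcyc
    have hen : c₀.edges ≠ [] := by
      have h3 := hc₀.three_le_length
      intro h
      have := c₀.length_edges
      rw [h] at this
      simp at this
      omega
    obtain ⟨e, he⟩ := List.exists_mem_of_ne_nil _ hen
    induction e using Sym2.ind with | _ v w =>
    have he₂ : s(v, w) ∈ G.edgeSet := c₀.edges_subset_edgeSet he
    set G' := G \ fromEdgeSet {s(v, w)} with hG'
    have hle : G' ≤ G := sdiff_le
    have hE' : G'.edgeSet = G.edgeSet \ {s(v, w)} := edgeSet_delete G _
    have hm : Nat.card G'.edgeSet + 1 = n := by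
      rw [← hn, hE', Nat.card_coe_set_eq, Nat.card_coe_set_eq]
      exact Set.ncard_diff_singleton_add_one he₂
    have hr : G'.Reachable v w :=
      (adj_and_reachable_delete_edges_iff_exists_cycle.mpr ⟨u₀, c₀, hc₀, he⟩).2
    have hcc : Nat.card G'.ConnectedComponent = Nat.card G.ConnectedComponent :=
      cc_card_nonbridge hr
    -- transfer the disjointness hypothesis
    have hT : ∀ {y : V} (d : G'.Walk y y), ∀ f ∈ d.edges, f ∈ G.edgeSet :=
      fun d f hf => edgeSet_mono hle (d.edges_subset_edgeSet hf)
    have hdisj' : ∀ (a b : V) (c : G'.Walk a a) (d : G'.Walk b b), c.IsCycle → d.IsCycle →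
        (∃ z, z ∈ c.support ∧ z ∈ d.support) → {f | f ∈ c.edges} = {f | f ∈ d.edges} := by
      intro a b c d hc hd hz
      have := hdisj a b (c.transfer G (hT c)) (d.transfer G (hT d)) (hc.transfer _)
        (hd.transfer _) (by simpa [Walk.support_transfer] using hz)
      simpa [Walk.edges_transfer] using this
    have IH' := IH (Nat.card G'.edgeSet) (by omega) G' rfl hdisj'
    -- the cycle sets
    set E₀ : Set (Sym2 V) := {f | f ∈ c₀.edges} with hE₀
    have hE0mem : E₀ ∈ cycSet G := ⟨u₀, c₀, hc₀, rfl⟩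
    have hE0not : E₀ ∉ cycSet G' := by
      rintro ⟨y, d, hd, hEd⟩
      have hmem : s(v, w) ∈ d.edges := by
        have : s(v, w) ∈ E₀ := he
        rw [hEd] at this
        exact this
      have := d.edges_subset_edgeSet hmem
      rw [hE'] at this
      exact this.2 rfl
    have hset : cycSet G = insert E₀ (cycSet G') := by
      ext E
      constructor
      · rintro ⟨y, d, hd, rfl⟩
        by_cases hmem : s(v, w) ∈ d.edges
        · left
          exact hdisj y u₀ d c₀ hd hc₀
            ⟨v, d.fst_mem_support_of_mem_edges hmem, c₀.fst_mem_support_of_mem_edges he⟩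
        · right
          have hsub : ∀ f ∈ d.edges, f ∈ G'.edgeSet := by
            intro f hf
            rw [hE']
            exact ⟨d.edges_subset_edgeSet hf, fun h => hmem (Set.mem_singleton_iff.mp h ▸ hf)⟩
          exact ⟨y, d.transfer G' hsub, hd.transfer _, by simp [Walk.edges_transfer]⟩
      · rintro (rfl | hE)
        · exact hE0mem
        · exact cycSet_mono hle hE
    have hScard : Nat.card (cycSet G) = Nat.card (cycSet G') + 1 := by
      rw [Nat.card_coe_set_eq, Nat.card_coe_set_eq, hset,
        Set.ncard_insert_of_notMem hE0not]
    rw [SimpleGraph.cycleDim] at IH' ⊢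
    omega
  · -- no cycles
    by_cases hemp : G.edgeSet = ∅
    · -- empty graph
      obtain rfl : G = ⊥ := edgeSet_eq_empty.mp hemp
      have hccV : Nat.card V = Nat.card (⊥ : SimpleGraph V).ConnectedComponent := by
        refine Nat.card_eq_of_bijective (⊥ : SimpleGraph V).connectedComponentMk ⟨?_, ?_⟩
        · intro a b h
          exact reachable_bot.mp ((ConnectedComponent.eq).mp h)
        · exact fun c => c.exists_rep
      have hS : cycSet (⊥ : SimpleGraph V) = ∅ := by
        rw [Set.eq_empty_iff_forall_notMem]
        rintro E ⟨y, d, hd, rfl⟩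
        exact hcyc ⟨y, d, hd⟩
      have hm0 : Nat.card (⊥ : SimpleGraph V).edgeSet = 0 := by
        rw [Nat.card_coe_set_eq, hemp, Set.ncard_empty]
      rw [SimpleGraph.cycleDim, hS, hm0]
      rw [Nat.card_coe_set_eq, Set.ncard_empty]
      omega
    · obtain ⟨e, he₂⟩ := Set.nonempty_iff_ne_empty.mpr hemp
      induction e using Sym2.ind with | _ v w =>
      have hadj : G.Adj v w := (mem_edgeSet G).mp he₂
      set G' := G \ fromEdgeSet {s(v, w)} with hG'
      have hle : G' ≤ G := sdiff_le
      have hE' : G'.edgeSet = G.edgeSet \ {s(v, w)} := edgeSet_delete G _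
      have hm : Nat.card G'.edgeSet + 1 = n := by
        rw [← hn, hE', Nat.card_coe_set_eq, Nat.card_coe_set_eq]
        exact Set.ncard_diff_singleton_add_one he₂
      have hnr : ¬ G'.Reachable v w := by
        intro hr
        obtain ⟨y, d, hd, -⟩ := adj_and_reachable_delete_edges_iff_exists_cycle.mp ⟨hadj, hr⟩
        exact hcyc ⟨y, d, hd⟩
      have hcc : Nat.card G'.ConnectedComponent = Nat.card G.ConnectedComponent + 1 :=
        cc_card_bridge hadj hnr
      have hS : cycSet G = ∅ := by
        rw [Set.eq_empty_iff_forall_notMem]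
        rintro E ⟨y, d, hd, rfl⟩
        exact hcyc ⟨y, d, hd⟩
      have hS' : cycSet G' = ∅ := by
        rw [Set.eq_empty_iff_forall_notMem]
        rintro E hE
        obtain ⟨y, d, hd, -⟩ := cycSet_mono hle hE
        exact hcyc ⟨y, d, hd⟩
      have hdisj' : ∀ (a b : V) (c : G'.Walk a a) (d : G'.Walk b b), c.IsCycle → d.IsCycle →
          (∃ z, z ∈ c.support ∧ z ∈ d.support) → {f | f ∈ c.edges} = {f | f ∈ d.edges} := by
        intro a b c d hc hd hz
        have hmem : ({f | f ∈ c.edges} : Set (Sym2 V)) ∈ cycSet G' := ⟨a, c, hc, rfl⟩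
        rw [hS'] at hmem
        exact hmem.elim
      have IH' := IH (Nat.card G'.edgeSet) (by omega) G' rfl hdisj'
      rw [hS', SimpleGraph.cycleDim] at IH'
      rw [SimpleGraph.cycleDim, hS]
      simp only [Nat.card_coe_set_eq, Set.ncard_empty] at IH' ⊢
      simp only [Nat.card_coe_set_eq] at hm hn
      omega

end Aux

/-- If every two cycles of `G` are vertex-disjoint (cycles sharing a vertex coincide, i.e.
have the same edge set), then `ω(G)` equals the number of cycles of `G`, where cycles are
counted as subgraphs, i.e. by their edge sets. -/
theorem cycleDim_eq_card_cycles {V : Type*} [Fintype V] (G : SimpleGraph V)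
    (hdisj : ∀ (u v : V) (c : G.Walk u u) (d : G.Walk v v), c.IsCycle → d.IsCycle →
      (∃ w, w ∈ c.support ∧ w ∈ d.support) → {e | e ∈ c.edges} = {e | e ∈ d.edges}) :
    G.cycleDim =
      (Nat.card {E : Set (Sym2 V) |
        ∃ (u : V) (c : G.Walk u u), c.IsCycle ∧ E = {e | e ∈ c.edges}} : ℤ) := by
  exact main_aux (Nat.card G.edgeSet) G rfl hdisj
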